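/- Let r ≥ 2 and k ≥ 3 be integers. Let H be a multicolored cluster graph with color set {1,…,r} whose underlying graph is the complete graph K_k, whose every edge e has |L_e| ≥ 2, and which is K₃⁽²⁾-free. Then ∏_{e ∈ E(H)} |L_e| ≤ ( r·⌊k/2⌋ / C(k,2) )^{C(k,2)}, where C(k,2) = k(k−1)/2. -/
import Mathlib


open SimpleGraph

open Finset in
lemma amgm_prod_le {ι : Type*} (s : Finset ι) (hs : s.Nonempty) (z : ι → ℝ)
    (hz : ∀ i ∈ s, 0 ≤ z i) :
    ∏ i ∈ s, z i ≤ ((∑ i ∈ s, z i) / s.card) ^ s.card := by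
  have hm : (0:ℝ) < s.card := by
    have := Finset.card_pos.mpr hs; exact_mod_cast this
  have h := Real.geom_mean_le_arith_mean s (fun _ => 1) z (by intro i _; norm_num)
    (by simpa using hm) hz
  simp only [Real.rpow_one, one_mul, Finset.sum_const, nsmul_eq_mul, mul_one] at h
  have h2 := Real.rpow_le_rpow (Real.rpow_nonneg (Finset.prod_nonneg hz) _) h
    (le_of_lt hm)
  rwa [← Real.rpow_mul (Finset.prod_nonneg hz), inv_mul_cancel₀ (ne_of_gt hm),
    Real.rpow_one, Real.rpow_natCast] at h2

theorem stmt11 (r k : ℕ) (hr : 2 ≤ r) (hk : 3 ≤ k)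
    -- `L` assigns a color list to each edge of the complete graph `K_k`
    (L : Sym2 (Fin k) → Finset (Fin r))
    (hL2 : ∀ e : Sym2 (Fin k), ¬ e.IsDiag → 2 ≤ (L e).card)
    -- `K₃⁽²⁾`-freeness: the lists of the edges of any triangle are pairwise disjoint
    (hfree : ∀ a b c : Fin k, a ≠ b → a ≠ c → b ≠ c →
      Disjoint (L s(a, b)) (L s(a, c)) ∧ Disjoint (L s(a, b)) (L s(b, c)) ∧
      Disjoint (L s(a, c)) (L s(b, c))) :
    (∏ e ∈ Finset.univ.filter (fun e : Sym2 (Fin k) => ¬ e.IsDiag), ((L e).card : ℝ)) ≤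
      (((r : ℝ) * ((k / 2 : ℕ) : ℝ)) / ((k : ℝ) * ((k : ℝ) - 1) / 2)) ^ (k * (k - 1) / 2) := by
  classical
  set s : Finset (Sym2 (Fin k)) :=
    Finset.univ.filter (fun e : Sym2 (Fin k) => ¬ e.IsDiag) with hs_def
  have hk0 : 0 < k := by omega
  -- card of the edge set
  have hcard : s.card = k * (k - 1) / 2 := by
    have h1 : s.card = Fintype.card { a : Sym2 (Fin k) // ¬ a.IsDiag } :=
      (Fintype.card_subtype _).symm
    rw [h1, Sym2.card_subtype_not_diag, Fintype.card_fin, Nat.choose_two_right]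
  -- each color class is a matching
  have hmatch : ∀ c : Fin r, (s.filter (fun e => c ∈ L e)).card ≤ k / 2 := by
    intro c
    set M := s.filter (fun e => c ∈ L e) with hM
    have hdisj : ∀ e ∈ M, ∀ e' ∈ M, e ≠ e' →
        Disjoint (Finset.univ.filter (· ∈ e)) (Finset.univ.filter (· ∈ e')) := by
      intro e he e' he' hne
      rw [Finset.disjoint_left]
      intro x hx hx'
      simp only [Finset.mem_filter, Finset.mem_univ, true_and] at hx hx'
      have hce : c ∈ L e := (Finset.mem_filter.1 he).2
      have hce' : c ∈ L e' := (Finset.mem_filter.1 he').2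
      have hnd : ¬ e.IsDiag := by
        have := (Finset.mem_filter.1 (Finset.mem_filter.1 he).1).2; exact this
      have hnd' : ¬ e'.IsDiag := by
        have := (Finset.mem_filter.1 (Finset.mem_filter.1 he').1).2; exact this
      have h1 : s(x, Sym2.Mem.other hx) = e := Sym2.other_spec hx
      have h2 : s(x, Sym2.Mem.other hx') = e' := Sym2.other_spec hx'
      set y := Sym2.Mem.other hx
      set y' := Sym2.Mem.other hx'
      have hxy : x ≠ y := by
        intro h; apply hnd; rw [← h1, ← h]; exact Sym2.mk_isDiag_iff.2 rfl
      have hxy' : x ≠ y' := by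
        intro h; apply hnd'; rw [← h2, ← h]; exact Sym2.mk_isDiag_iff.2 rfl
      have hyy' : y ≠ y' := by
        intro h; apply hne; rw [← h1, ← h2, h]
      have := (hfree x y y' hxy hxy' hyy').1
      rw [h1, h2] at this
      exact (Finset.disjoint_left.1 this) hce hce'
    have hbiU : (M.biUnion (fun e => Finset.univ.filter (· ∈ e))).card
        = ∑ e ∈ M, (Finset.univ.filter (· ∈ e)).card := Finset.card_biUnion hdisj
    have hcard2 : ∀ e ∈ M, (Finset.univ.filter (· ∈ e)).card = 2 := by
      intro e he
      have hnd : ¬ e.IsDiag := (Finset.mem_filter.1 (Finset.mem_filter.1 he).1).2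
      induction e using Sym2.ind with
      | _ a b =>
        have hab : a ≠ b := fun h => hnd (Sym2.mk_isDiag_iff.2 h)
        have : Finset.univ.filter (· ∈ s(a, b)) = {a, b} := by
          ext x; simp [Sym2.mem_iff]
        rw [this, Finset.card_insert_of_notMem (by simpa using hab),
          Finset.card_singleton]
    have h2M : 2 * M.card ≤ k := by
      calc 2 * M.card = ∑ e ∈ M, (Finset.univ.filter (· ∈ e)).card := by
            rw [Finset.sum_congr rfl hcard2, Finset.sum_const, smul_eq_mul, mul_comm]
        _ = (M.biUnion (fun e => Finset.univ.filter (· ∈ e))).card := hbiU.symm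
        _ ≤ (Finset.univ : Finset (Fin k)).card := Finset.card_le_card (Finset.subset_univ _)
        _ = k := by simp
    omega
  -- the sum of list sizes is at most r * ⌊k/2⌋
  have hsum : ∑ e ∈ s, (L e).card ≤ r * (k / 2) := by
    have key : ∑ e ∈ s, (L e).card
        = ∑ c : Fin r, (s.filter (fun e => c ∈ L e)).card := by
      have : ∀ e, (L e).card = ∑ c : Fin r, if c ∈ L e then 1 else 0 := by
        intro e
        rw [← Finset.card_filter]
        congr 1
        ext c; simp
      simp_rw [this, Finset.card_filter]
      rw [Finset.sum_comm]
    rw [key]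
    calc ∑ c : Fin r, (s.filter (fun e => c ∈ L e)).card
        ≤ ∑ _c : Fin r, k / 2 := Finset.sum_le_sum (fun c _ => hmatch c)
      _ = r * (k / 2) := by simp [mul_comm]
  -- nonemptiness of the edge set
  have hne : s.Nonempty := by
    refine ⟨s(⟨0, by omega⟩, ⟨1, by omega⟩), ?_⟩
    simp only [hs_def, Finset.mem_filter, Finset.mem_univ, true_and, Sym2.mk_isDiag_iff]
    intro h
    exact absurd (congrArg Fin.val h) (by norm_num)
  -- apply AM-GM
  have hAM := amgm_prod_le s hne (fun e => ((L e).card : ℝ))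
    (fun e _ => by positivity)
  have hmpos : (0:ℝ) < s.card := by
    have := Finset.card_pos.mpr hne; exact_mod_cast this
  have hsum' : (∑ e ∈ s, ((L e).card : ℝ)) ≤ (r : ℝ) * ((k / 2 : ℕ) : ℝ) := by
    push_cast [← Nat.cast_sum]
    exact_mod_cast hsum
  have hstep : ((∑ e ∈ s, ((L e).card : ℝ)) / s.card) ^ s.card
      ≤ (((r : ℝ) * ((k / 2 : ℕ) : ℝ)) / s.card) ^ s.card := by
    refine pow_le_pow_left₀ (div_nonneg (Finset.sum_nonneg (fun e _ => by positivity)) hmpos.le) ?_ _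
    gcongr
  -- identify card with the real expression
  have hcastcard : (s.card : ℝ) = (k : ℝ) * ((k : ℝ) - 1) / 2 := by
    rw [hcard]
    have heven : 2 ∣ k * (k - 1) := by
      rcases Nat.even_or_odd k with h | h
      · exact Dvd.dvd.mul_right h.two_dvd _
      · exact Dvd.dvd.mul_left (Nat.Odd.sub_odd h odd_one).two_dvd _
    rw [Nat.cast_div heven (by norm_num)]
    push_cast [Nat.cast_sub (by omega : 1 ≤ k)]
    ring
  calc (∏ e ∈ s, ((L e).card : ℝ))
      ≤ ((∑ e ∈ s, ((L e).card : ℝ)) / s.card) ^ s.card := hAM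
    _ ≤ (((r : ℝ) * ((k / 2 : ℕ) : ℝ)) / s.card) ^ s.card := hstep
    _ = (((r : ℝ) * ((k / 2 : ℕ) : ℝ)) / ((k : ℝ) * ((k : ℝ) - 1) / 2)) ^ (k * (k - 1) / 2) := by
        rw [hcastcard, hcard]
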